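/- Under the abstract factorization hypotheses, if 0 ≤ n ≤ m ≤ N and f ∈ V_n satisfies ℒ_n f = 0, then ℒ_{m+1} ℒ_{m+2} ⋯ ℒ_N ℛ_{N−1} ℛ_{N−2} ⋯ ℛ_n f = [∏_{h=m}^{N−1} ∑_{k=n}^{h}(b_k − a_k)] · ℛ_{m−1} ℛ_{m−2} ⋯ ℛ_n f in V_m (for m = N the product is empty and equals 1, and for m = n the right-hand vector is f itself). -/

import Mathlib

open scoped ComplexInnerProductSpace

noncomputable section

variable {V : ℕ → Type*} [∀ N, NormedAddCommGroup (V N)] [∀ N, InnerProductSpace ℂ (V N)]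

/-- `RIter R n k` is the iterated raising operator
`ℛ_{n+k-1} ∘ ℛ_{n+k-2} ∘ ⋯ ∘ ℛ_n : V n → V (n+k)`. -/
def RIter (R : ∀ N, V N →ₗ[ℂ] V (N + 1)) (n : ℕ) : ∀ k : ℕ, V n →ₗ[ℂ] V (n + k)
  | 0 => LinearMap.id
  | k + 1 => (R (n + k)).comp (RIter R n k)

/-- `LIter L m k` is the iterated lowering operator
`ℒ_{m+1} ∘ ℒ_{m+2} ∘ ⋯ ∘ ℒ_{m+k} : V (m+k) → V m` (here `L N = ℒ_{N+1}`). -/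
def LIter (L : ∀ N, V (N + 1) →ₗ[ℂ] V N) (m : ℕ) : ∀ k : ℕ, V (m + k) →ₗ[ℂ] V m
  | 0 => LinearMap.id
  | k + 1 => (LIter L m k).comp (L (m + k))

/-- `KerL L n f` says `ℒ_n f = 0`, with the convention `ℒ_0 = 0` (so that for `n = 0` every `f`
qualifies). -/
def KerL (L : ∀ N, V (N + 1) →ₗ[ℂ] V N) : ∀ n : ℕ, V n → Prop
  | 0, _ => True
  | m + 1, f => L m f = 0

section Aux

variable (D : ∀ N, V N →ₗ[ℂ] V N)
    (R : ∀ N, V N →ₗ[ℂ] V (N + 1)) (L : ∀ N, V (N + 1) →ₗ[ℂ] V N)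
    (a b e : ℕ → ℂ)

lemma step_low (hLR : ∀ N : ℕ, (L N).comp (R N) = -(D N) + b N • LinearMap.id)
    (m : ℕ) (g : V m) (hDg : D m g = (a m - e m) • g)
    (he : e (m + 1) = e m + (b m - a m)) :
    L m (R m g) = e (m + 1) • g := by
  have h := LinearMap.congr_fun (hLR m) g
  simp only [LinearMap.comp_apply, LinearMap.add_apply, LinearMap.neg_apply,
    LinearMap.smul_apply, LinearMap.id_apply] at h
  rw [h, hDg, he]
  module

lemma step_D (hRL : ∀ N : ℕ, (R N).comp (L N) = -(D (N + 1)) + a (N + 1) • LinearMap.id)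
    (hLR : ∀ N : ℕ, (L N).comp (R N) = -(D N) + b N • LinearMap.id)
    (m : ℕ) (g : V m) (hDg : D m g = (a m - e m) • g)
    (he : e (m + 1) = e m + (b m - a m)) :
    D (m + 1) (R m g) = (a (m + 1) - e (m + 1)) • R m g := by
  have h := LinearMap.congr_fun (hRL m) (R m g)
  simp only [LinearMap.comp_apply, LinearMap.add_apply, LinearMap.neg_apply,
    LinearMap.smul_apply, LinearMap.id_apply] at h
  rw [step_low D R L a b e hLR m g hDg he, map_smul] at h
  have h4 : e (m + 1) • R m g - a (m + 1) • R m g = -(D (m + 1) (R m g)) :=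
    sub_eq_of_eq_add h
  rw [sub_smul, ← neg_neg (D (m + 1) (R m g)), ← h4]
  abel

lemma D_RIter (hRL : ∀ N : ℕ, (R N).comp (L N) = -(D (N + 1)) + a (N + 1) • LinearMap.id)
    (hLR : ∀ N : ℕ, (L N).comp (R N) = -(D N) + b N • LinearMap.id)
    (k m : ℕ) (g : V m) (hDg : D m g = (a m - e m) • g)
    (he : ∀ h, m ≤ h → e (h + 1) = e h + (b h - a h)) :
    D (m + k) (RIter R m k g) = (a (m + k) - e (m + k)) • RIter R m k g := by
  induction k with
  | zero => simpa [RIter] using hDg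
  | succ k ih =>
    show D (m + k + 1) (R (m + k) (RIter R m k g)) = _
    exact step_D D R L a b e hRL hLR (m + k) (RIter R m k g) ih
      (he (m + k) (Nat.le_add_right m k))

lemma LIter_RIter (hRL : ∀ N : ℕ, (R N).comp (L N) = -(D (N + 1)) + a (N + 1) • LinearMap.id)
    (hLR : ∀ N : ℕ, (L N).comp (R N) = -(D N) + b N • LinearMap.id)
    (k m : ℕ) (g : V m) (hDg : D m g = (a m - e m) • g)
    (he : ∀ h, m ≤ h → e (h + 1) = e h + (b h - a h)) :
    LIter L m k (RIter R m k g) = (∏ h ∈ Finset.Ico m (m + k), e (h + 1)) • g := by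
  induction k with
  | zero => simp [LIter, RIter]
  | succ k ih =>
    have h1 := D_RIter D R L a b e hRL hLR k m g hDg he
    have h2 := step_low D R L a b e hLR (m + k) (RIter R m k g) h1
      (he (m + k) (Nat.le_add_right m k))
    show LIter L m k (L (m + k) (R (m + k) (RIter R m k g))) = _
    rw [h2, map_smul, ih, show m + (k + 1) = m + k + 1 from rfl, Finset.prod_Ico_succ_top (Nat.le_add_right m k), smul_smul,
      mul_comm]

end Aux

/-- Under the abstract factorization hypotheses, if `0 ≤ n ≤ m ≤ N` (here `m = n + j`,
`N = n + j + k`) and `f ∈ V n` satisfies `ℒ_n f = 0`, then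
`ℒ_{m+1} ℒ_{m+2} ⋯ ℒ_N ℛ_{N-1} ℛ_{N-2} ⋯ ℛ_n f
  = (∏_{h=m}^{N-1} ∑_{k'=n}^{h} (b_{k'} - a_{k'})) • ℛ_{m-1} ℛ_{m-2} ⋯ ℛ_n f` in `V m`. -/

theorem iterated_lowering_of_iterated_raising
    [∀ N, FiniteDimensional ℂ (V N)]
    (hdim : ∀ N, Module.finrank ℂ (V N) = N + 1)
    (D : ∀ N, V N →ₗ[ℂ] V N) (hsym : ∀ N, (D N).IsSymmetric)
    (R : ∀ N, V N →ₗ[ℂ] V (N + 1)) (L : ∀ N, V (N + 1) →ₗ[ℂ] V N)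
    (a b : ℕ → ℂ)
    (hAdj : ∀ (N : ℕ) (f₁ : V N) (f₂ : V (N + 1)), ⟪R N f₁, f₂⟫ = ⟪f₁, L N f₂⟫)
    (hRL : ∀ N : ℕ, (R N).comp (L N) = -(D (N + 1)) + a (N + 1) • LinearMap.id)
    (hLR : ∀ N : ℕ, (L N).comp (R N) = -(D N) + b N • LinearMap.id)
    (hD0 : D 0 = a 0 • LinearMap.id)
    (n j k : ℕ) (f : V n) (hf : KerL L n f) :
    LIter L (n + j) k (RIter R (n + j) k (RIter R n j f)) =
      (∏ h ∈ Finset.Ico (n + j) (n + j + k), ∑ i ∈ Finset.Icc n h, (b i - a i)) •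
        RIter R n j f := by
  set e : ℕ → ℂ := fun h => ∑ i ∈ Finset.Ico n h, (b i - a i) with he_def
  have he : ∀ h, n ≤ h → e (h + 1) = e h + (b h - a h) := fun h hh => by
    simp only [he_def]
    exact Finset.sum_Ico_succ_top hh _
  have hDn : D n f = (a n - e n) • f := by
    have hen : e n = 0 := by simp [he_def]
    rw [hen, sub_zero]
    cases n with
    | zero => rw [hD0]; simp
    | succ m =>
      have hf' : L m f = 0 := hf
      have h := LinearMap.congr_fun (hRL m) f
      simp only [LinearMap.comp_apply, LinearMap.add_apply, LinearMap.neg_apply,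
        LinearMap.smul_apply, LinearMap.id_apply] at h
      rw [hf', map_zero] at h
      exact neg_add_eq_zero.mp h.symm
  have hDm : D (n + j) (RIter R n j f) = (a (n + j) - e (n + j)) • RIter R n j f :=
    D_RIter D R L a b e hRL hLR j n f hDn he
  have key := LIter_RIter D R L a b e hRL hLR k (n + j) (RIter R n j f) hDm
    (fun h hh => he h (le_trans (Nat.le_add_right n j) hh))
  rw [key]
  refine congrArg (· • RIter R n j f) (Finset.prod_congr rfl fun h _ => ?_)
  show (∑ i ∈ Finset.Ico n (h + 1), (b i - a i)) = _
  rw [Finset.Ico_add_one_right_eq_Icc]
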